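/- Fix an odd integer b = 2k+1 with k ≥ 1, ρ ∈ [0,1), and γ ∈ (0,1]. Define T(u) = ρ·γ·u + (1-ρ)·f_b(γ·u) for u ∈ [0,1] and α = γ·(ρ + (1-ρ)·f_b'(0)) where f_b'(0) = b·C(b-1,(b-1)/2)/2^{b-1}. Assume α > 1 and let μ* ∈ (0,1] be the unique positive fixed point of T. Then there exist constants C₁, C₂, C₃ ≥ 0 depending only on (b, ρ, γ) such that for every μ₀ ∈ (0,1] and every ε ∈ (0,1), the iterates μ_{t+1} = T(μ_t) satisfy μ_L ≥ (1-ε)·μ* for all integers L ≥ C₁·log(1/μ₀) + C₂·log(1/ε) + C₃. -/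

import Mathlib

open Finset Filter

/-- The upper binomial tail `F(p) = ∑_{j=k+1}^{2k+1} C(2k+1,j) p^j (1-p)^{2k+1-j}`. -/
noncomputable def majF (k : ℕ) (p : ℝ) : ℝ :=
  ∑ j ∈ Finset.Icc (k + 1) (2 * k + 1),
    (Nat.choose (2 * k + 1) j : ℝ) * p ^ j * (1 - p) ^ (2 * k + 1 - j)

/-- The majority map `f_b(u) = 2 F((1+u)/2) - 1` for odd fan-in `b = 2k+1`. -/
noncomputable def majMap (k : ℕ) (u : ℝ) : ℝ :=
  2 * majF k ((1 + u) / 2) - 1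

/-- The one-layer recursion map `T(u) = ρ γ u + (1-ρ) f_b(γ u)` for fan-in `b = 2k+1`. -/
noncomputable def Tmap (k : ℕ) (ρ γ u : ℝ) : ℝ :=
  ρ * γ * u + (1 - ρ) * majMap k (γ * u)

/-- The derivative of the majority map at the origin:
`f_b'(0) = b C(b-1,(b-1)/2)/2^{b-1} = (2k+1) C(2k,k)/2^{2k}`. -/
noncomputable def majPrimeZero (k : ℕ) : ℝ :=
  (2 * k + 1 : ℝ) * (Nat.choose (2 * k) k : ℝ) / 2 ^ (2 * k)

/-- The effective per-layer gain `α = γ (ρ + (1-ρ) f_b'(0))`. -/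
noncomputable def alphaGain (k : ℕ) (ρ γ : ℝ) : ℝ :=
  γ * (ρ + (1 - ρ) * majPrimeZero k)

lemma majF_hasDerivAt (k : ℕ) (p : ℝ) :
    HasDerivAt (majF k)
      ((2 * k + 1 : ℝ) * (Nat.choose (2 * k) k : ℝ) * (p ^ k * (1 - p) ^ k)) p := by
  set n := 2 * k + 1 with hn
  set A : ℕ → ℝ := fun j => ((n.choose j : ℝ) * j) * (p ^ (j - 1) * (1 - p) ^ (n - j)) with hA
  have hterm : ∀ j ∈ Finset.Icc (k + 1) n,
      HasDerivAt (fun q : ℝ => (n.choose j : ℝ) * q ^ j * (1 - q) ^ (n - j))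
        (A j - A (j + 1)) p := by
    intro j hj
    simp only [Finset.mem_Icc] at hj
    have h1 : HasDerivAt (fun q : ℝ => (n.choose j : ℝ) * q ^ j)
        ((n.choose j : ℝ) * ((j : ℝ) * p ^ (j - 1))) p :=
      (hasDerivAt_pow j p).const_mul _
    have h2 : HasDerivAt (fun q : ℝ => (1 - q) ^ (n - j))
        (((n - j : ℕ) : ℝ) * (1 - p) ^ (n - j - 1) * (-1)) p :=
      ((hasDerivAt_id p).const_sub 1).pow (n - j)
    have hmul := h1.mul h2
    refine hmul.congr_deriv ?_
    have hkey : ((n.choose (j + 1) : ℝ) * ((j + 1 : ℕ) : ℝ)) = (n.choose j : ℝ) * ((n - j : ℕ) : ℝ) := by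
      exact_mod_cast congrArg (fun m : ℕ => (m : ℝ)) (Nat.choose_succ_right_eq n j)
    have hj1 : j + 1 - 1 = j := rfl
    have hj2 : n - (j + 1) = n - j - 1 := rfl
    simp only [hA, hj1, hj2]
    rw [hkey]
    ring
  have hsum : HasDerivAt (majF k) (∑ j ∈ Finset.Icc (k + 1) n, (A j - A (j + 1))) p :=
    HasDerivAt.fun_sum hterm
  have htel : ∑ j ∈ Finset.Icc (k + 1) n, (A j - A (j + 1)) = A (k + 1) - A (2 * k + 2) := by
    rw [← Finset.Ico_add_one_right_eq_Icc, Finset.sum_Ico_eq_sum_range]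
    have h : n + 1 - (k + 1) = k + 1 := by omega
    rw [h]
    have ht := Finset.sum_range_sub' (fun i => A (k + 1 + i)) (k + 1)
    simp only [← Nat.add_assoc, Nat.add_zero] at ht
    have e : k + 1 + k + 1 = 2 * k + 2 := by omega
    rw [e] at ht
    exact ht
  have hA2 : A (2 * k + 2) = 0 := by
    have h0 : n.choose (2 * k + 2) = 0 := Nat.choose_eq_zero_of_lt (by omega)
    simp [hA, h0]
  have hA1 : A (k + 1) = (2 * k + 1 : ℝ) * (Nat.choose (2 * k) k : ℝ) * (p ^ k * (1 - p) ^ k) := by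
    have hid : (2 * k + 1) * Nat.choose (2 * k) k = n.choose (k + 1) * (k + 1) := by
      have := Nat.add_one_mul_choose_eq (2 * k) k
      simpa [hn] using this
    have hc : ((2 * k + 1 : ℕ) : ℝ) * (Nat.choose (2 * k) k : ℝ)
        = (n.choose (k + 1) : ℝ) * ((k + 1 : ℕ) : ℝ) := by
      exact_mod_cast congrArg (fun m : ℕ => (m : ℝ)) hid
    have e1 : (k + 1) - 1 = k := rfl
    have e2 : n - (k + 1) = k := by omega
    simp only [hA, e1, e2]
    push_cast at hc ⊢
    rw [← hc]
  rw [htel, hA2, hA1] at hsum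
  simpa using hsum

noncomputable def TD (k : ℕ) (ρ γ : ℝ) (u : ℝ) : ℝ :=
  ρ * γ + (1 - ρ) * γ * ((2 * k + 1 : ℝ) * (Nat.choose (2 * k) k : ℝ)
    * ((1 - (γ * u) ^ 2) / 4) ^ k)

lemma Tmap_hasDerivAt (k : ℕ) (ρ γ : ℝ) (u : ℝ) :
    HasDerivAt (Tmap k ρ γ) (TD k ρ γ u) u := by
  have hinner : HasDerivAt (fun u : ℝ => (1 + γ * u) / 2) (γ / 2) u := by
    simpa using (((hasDerivAt_id u).const_mul γ).const_add 1).div_const 2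
  have hF := (majF_hasDerivAt k ((1 + γ * u) / 2)).comp u hinner
  have hmaj : HasDerivAt (fun v : ℝ => majMap k (γ * v))
      (2 * ((2 * k + 1 : ℝ) * (Nat.choose (2 * k) k : ℝ)
        * (((1 + γ * u) / 2) ^ k * (1 - (1 + γ * u) / 2) ^ k) * (γ / 2))) u := by
    unfold majMap
    exact (hF.const_mul 2).sub_const 1
  have hlin : HasDerivAt (fun v : ℝ => ρ * γ * v) (ρ * γ) u := by
    simpa using (hasDerivAt_id u).const_mul (ρ * γ)
  have := hlin.add (hmaj.const_mul (1 - ρ))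
  refine this.congr_deriv ?_
  unfold TD
  have h1 : (1 : ℝ) - (1 + γ * u) / 2 = (1 - γ * u) / 2 := by ring
  rw [h1]
  have h2 : ((1 + γ * u) / 2) ^ k * ((1 - γ * u) / 2) ^ k = ((1 - (γ * u) ^ 2) / 4) ^ k := by
    rw [← mul_pow]; congr 1; ring
  rw [h2]; ring

lemma deriv_Tmap (k : ℕ) (ρ γ : ℝ) : deriv (Tmap k ρ γ) = TD k ρ γ := by
  funext u; exact (Tmap_hasDerivAt k ρ γ u).deriv

lemma sq_le_one' {γ : ℝ} (hγ : γ ∈ Set.Ioc (0:ℝ) 1) {u : ℝ} (h0 : 0 ≤ u) (h1 : u ≤ 1) :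
    (γ * u) ^ 2 ≤ 1 := by
  have h2 : 0 ≤ γ * u := mul_nonneg hγ.1.le h0
  have h3 : γ * u ≤ 1 := by
    calc γ * u ≤ 1 * 1 := mul_le_mul hγ.2 h1 h0 zero_le_one
    _ = 1 := one_mul 1
  nlinarith

lemma Tmap_monotoneOn {k : ℕ} {ρ γ : ℝ} (hρ : ρ ∈ Set.Ico (0:ℝ) 1) (hγ : γ ∈ Set.Ioc (0:ℝ) 1) :
    MonotoneOn (Tmap k ρ γ) (Set.Icc 0 1) := by
  apply monotoneOn_of_deriv_nonneg (convex_Icc 0 1)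
  · exact fun u _ => ((Tmap_hasDerivAt k ρ γ u).differentiableAt).continuousAt.continuousWithinAt
  · exact fun u _ => ((Tmap_hasDerivAt k ρ γ u).differentiableAt).differentiableWithinAt
  · intro u hu
    rw [interior_Icc] at hu
    rw [deriv_Tmap]
    unfold TD
    have h1 := sq_le_one' hγ hu.1.le hu.2.le
    have h2 : (0:ℝ) ≤ ((1 - (γ * u) ^ 2) / 4) ^ k :=
      pow_nonneg (by linarith) k
    have h3 : (0:ℝ) ≤ (2 * k + 1 : ℝ) * (Nat.choose (2 * k) k : ℝ) := by positivity
    have h4 : (0:ℝ) ≤ 1 - ρ := by linarith [hρ.2]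
    have := mul_nonneg (mul_nonneg (mul_nonneg h4 hγ.1.le) h3) h2
    have h5 : (0:ℝ) ≤ ρ * γ := mul_nonneg hρ.1 hγ.1.le
    nlinarith

lemma Tmap_concaveOn {k : ℕ} {ρ γ : ℝ} (hρ : ρ ∈ Set.Ico (0:ℝ) 1) (hγ : γ ∈ Set.Ioc (0:ℝ) 1) :
    ConcaveOn ℝ (Set.Icc (0:ℝ) 1) (Tmap k ρ γ) := by
  apply AntitoneOn.concaveOn_of_deriv (convex_Icc 0 1)
  · exact fun u _ => ((Tmap_hasDerivAt k ρ γ u).differentiableAt).continuousAt.continuousWithinAt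
  · exact fun u _ => ((Tmap_hasDerivAt k ρ γ u).differentiableAt).differentiableWithinAt
  · intro a ha b hb hab
    rw [interior_Icc] at ha hb
    rw [deriv_Tmap]
    unfold TD
    have h4 : (0:ℝ) ≤ 1 - ρ := by linarith [hρ.2]
    have hb2 := sq_le_one' hγ hb.1.le hb.2.le
    have hsq : (γ * a) ^ 2 ≤ (γ * b) ^ 2 := by
      have h0a : 0 ≤ γ * a := mul_nonneg hγ.1.le ha.1.le
      have : γ * a ≤ γ * b := mul_le_mul_of_nonneg_left hab hγ.1.le
      nlinarith
    have hpow : ((1 - (γ * b) ^ 2) / 4) ^ k ≤ ((1 - (γ * a) ^ 2) / 4) ^ k :=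
      pow_le_pow_left₀ (by linarith) (by linarith) k
    have h3 : (0:ℝ) ≤ (2 * k + 1 : ℝ) * (Nat.choose (2 * k) k : ℝ) := by positivity
    have hc : (0:ℝ) ≤ (1 - ρ) * γ * ((2 * k + 1 : ℝ) * (Nat.choose (2 * k) k : ℝ)) := by
      have := mul_nonneg (mul_nonneg h4 hγ.1.le) h3
      linarith
    nlinarith

lemma majF_half (k : ℕ) : majF k (1/2 : ℝ) = 1/2 := by
  have hsum : ∀ j ∈ Finset.Icc (k+1) (2*k+1),
      (Nat.choose (2*k+1) j : ℝ) * (1/2:ℝ)^j * (1 - 1/2:ℝ)^(2*k+1-j)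
        = (Nat.choose (2*k+1) j : ℝ) * (1/2:ℝ)^(2*k+1) := by
    intro j hj
    simp only [Finset.mem_Icc] at hj
    have : (1:ℝ) - 1/2 = 1/2 := by norm_num
    rw [this, mul_assoc, ← pow_add]
    congr 2
    omega
  unfold majF
  rw [Finset.sum_congr rfl hsum, ← Finset.sum_mul]
  have hN : ∑ j ∈ Finset.Icc (k+1) (2*k+1), Nat.choose (2*k+1) j = 4^k := by
    have h1 : ∑ j ∈ Finset.range (2*k+2), Nat.choose (2*k+1) j = 2^(2*k+1) := by
      have := Nat.sum_range_choose (2*k+1)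
      simpa using this
    have h2 : ∑ j ∈ Finset.range (k+1), Nat.choose (2*k+1) j = 4^k :=
      Nat.sum_range_choose_halfway k
    have h3 : ∑ j ∈ Finset.Ico 0 (k+1), Nat.choose (2*k+1) j
        + ∑ j ∈ Finset.Ico (k+1) (2*k+2), Nat.choose (2*k+1) j
        = ∑ j ∈ Finset.Ico 0 (2*k+2), Nat.choose (2*k+1) j :=
      Finset.sum_Ico_consecutive _ (by omega) (by omega)
    rw [← Finset.Ico_add_one_right_eq_Icc]
    have e : 2*k+1+1 = 2*k+2 := by omega
    rw [e]
    simp only [← Finset.range_eq_Ico] at h3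
    rw [h1, h2] at h3
    have h4 : (2:ℕ)^(2*k+1) = 2 * 4^k := by
      rw [pow_succ']
      congr 1
      rw [pow_mul]
      norm_num
    omega
  have : (∑ j ∈ Finset.Icc (k+1) (2*k+1), (Nat.choose (2*k+1) j : ℝ)) = (4:ℝ)^k := by
    exact_mod_cast congrArg (fun m : ℕ => (m : ℝ)) hN
  rw [this]
  rw [show (4:ℝ)^k = 2^(2*k) by rw [pow_mul]; norm_num]
  rw [div_pow, one_pow]
  field_simp
  ring

lemma majMap_zero (k : ℕ) : majMap k 0 = 0 := by
  unfold majMap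
  norm_num [majF_half]

lemma Tmap_zero (k : ℕ) (ρ γ : ℝ) : Tmap k ρ γ 0 = 0 := by
  unfold Tmap
  simp [majMap_zero]

lemma majF_le_one (k : ℕ) {p : ℝ} (h0 : 0 ≤ p) (h1 : p ≤ 1) : majF k p ≤ 1 := by
  have hle : majF k p ≤ ∑ j ∈ Finset.range (2*k+2),
      (Nat.choose (2*k+1) j : ℝ) * p ^ j * (1 - p) ^ (2*k+1-j) := by
    apply Finset.sum_le_sum_of_subset_of_nonneg
    · intro j hj
      simp only [Finset.mem_Icc] at hj
      simp only [Finset.mem_range]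
      omega
    · intro j _ _
      have : (0:ℝ) ≤ 1 - p := by linarith
      positivity
  have heq : ∑ j ∈ Finset.range (2*k+2),
      (Nat.choose (2*k+1) j : ℝ) * p ^ j * (1 - p) ^ (2*k+1-j) = 1 := by
    have h2 := add_pow p (1-p) (2*k+1)
    have e : 2*k+1+1 = 2*k+2 := by omega
    rw [e] at h2
    have h3 : (p + (1-p)) = (1:ℝ) := by ring
    rw [h3, one_pow] at h2
    calc ∑ j ∈ Finset.range (2*k+2), (Nat.choose (2*k+1) j : ℝ) * p ^ j * (1 - p) ^ (2*k+1-j)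
        = ∑ j ∈ Finset.range (2*k+2), p ^ j * (1 - p) ^ (2*k+1-j) * (Nat.choose (2*k+1) j : ℝ) :=
          Finset.sum_congr rfl (fun j _ => by ring)
      _ = 1 := h2.symm
  linarith [hle, heq.le]

lemma Tmap_le_one (k : ℕ) {ρ γ u : ℝ} (hρ : ρ ∈ Set.Ico (0:ℝ) 1) (hγ : γ ∈ Set.Ioc (0:ℝ) 1)
    (h0 : 0 ≤ u) (h1 : u ≤ 1) : Tmap k ρ γ u ≤ 1 := by
  have hgu0 : 0 ≤ γ * u := mul_nonneg hγ.1.le h0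
  have hgu1 : γ * u ≤ 1 := by
    calc γ * u ≤ 1 * 1 := mul_le_mul hγ.2 h1 h0 zero_le_one
    _ = 1 := one_mul 1
  have hmaj : majMap k (γ * u) ≤ 1 := by
    unfold majMap
    have := majF_le_one k (p := (1 + γ * u)/2) (by linarith) (by linarith)
    linarith
  have h4 : (0:ℝ) ≤ 1 - ρ := by linarith [hρ.2]
  unfold Tmap
  have : (1 - ρ) * majMap k (γ * u) ≤ (1 - ρ) * 1 := mul_le_mul_of_nonneg_left hmaj h4
  nlinarith [hρ.1, hγ.1.le, hγ.2]

/-- Finite-depth convergence (mixing depth): in the supercritical regime there are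
constants `C₁, C₂, C₃ ≥ 0` depending only on `(b, ρ, γ)` such that for every starting
point `μ₀ ∈ (0,1]` and tolerance `ε ∈ (0,1)`, the iterates satisfy
`μ_L ≥ (1-ε) μ*` for all depths `L ≥ C₁ log(1/μ₀) + C₂ log(1/ε) + C₃`. -/
theorem mixing_depth (k : ℕ) (hk : 1 ≤ k) (ρ γ : ℝ)
    (hρ : ρ ∈ Set.Ico (0 : ℝ) 1) (hγ : γ ∈ Set.Ioc (0 : ℝ) 1)
    (hα : 1 < alphaGain k ρ γ)
    (μstar : ℝ) (hμ : μstar ∈ Set.Ioc (0 : ℝ) 1)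
    (hfix : Tmap k ρ γ μstar = μstar)
    (huniq : ∀ y ∈ Set.Ioc (0 : ℝ) 1, Tmap k ρ γ y = y → y = μstar) :
    ∃ C₁ C₂ C₃ : ℝ, 0 ≤ C₁ ∧ 0 ≤ C₂ ∧ 0 ≤ C₃ ∧
      ∀ μ₀ ∈ Set.Ioc (0 : ℝ) 1, ∀ ε ∈ Set.Ioo (0 : ℝ) 1,
        ∀ seq : ℕ → ℝ, seq 0 = μ₀ → (∀ t, seq (t + 1) = Tmap k ρ γ (seq t)) →
        ∀ L : ℕ, C₁ * Real.log (1 / μ₀) + C₂ * Real.log (1 / ε) + C₃ ≤ L →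
          (1 - ε) * μstar ≤ seq L := by
  set T := Tmap k ρ γ with hT
  have hmono : MonotoneOn T (Set.Icc 0 1) := Tmap_monotoneOn (k := k) hρ hγ
  have hconc : ConcaveOn ℝ (Set.Icc (0:ℝ) 1) T := Tmap_concaveOn (k := k) hρ hγ
  have hT0 : T 0 = 0 := Tmap_zero k ρ γ
  obtain ⟨hμ0, hμ1⟩ := hμ
  -- ratio inequality from concavity
  have ratio : ∀ a b : ℝ, 0 ≤ a → a ≤ b → b ≤ 1 → 0 < b → (a / b) * T b ≤ T a := by
    intro a b ha hab hb1 hb0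
    have h0mem : (0:ℝ) ∈ Set.Icc (0:ℝ) 1 := by constructor <;> norm_num
    have hbmem : b ∈ Set.Icc (0:ℝ) 1 := ⟨by linarith, hb1⟩
    have hw1 : (0:ℝ) ≤ 1 - a / b := by
      have : a / b ≤ 1 := div_le_one_of_le₀ hab hb0.le
      linarith
    have hw2 : (0:ℝ) ≤ a / b := div_nonneg ha hb0.le
    have hsum : (1 - a / b) + a / b = 1 := by ring
    have := hconc.2 h0mem hbmem hw1 hw2 hsum
    simp only [smul_eq_mul, mul_zero, zero_add, hT0, mul_zero] at this
    have hab' : a / b * b = a := div_mul_cancel₀ a hb0.ne'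
    rw [hab'] at this
    linarith
  -- setup h (half of fixed point), m, β, q
  set hpt : ℝ := μstar / 2 with hhpt
  have hh0 : 0 < hpt := by positivity
  have hhlt : hpt < μstar := by simp only [hhpt]; linarith
  have hh1 : hpt ≤ 1 := by linarith
  set m : ℝ := T hpt with hm
  have hm_ge : hpt ≤ m := by
    have := ratio hpt μstar hh0.le hhlt.le hμ1 hμ0
    rw [hfix] at this
    have h2 : hpt / μstar * μstar = hpt := div_mul_cancel₀ hpt hμ0.ne'
    rw [h2] at this
    exact this
  have hm_le : m ≤ μstar := by
    have := hmono ⟨hh0.le, hh1⟩ ⟨hμ0.le, hμ1⟩ hhlt.le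
    rw [hfix] at this
    exact this
  have hm_gt : hpt < m := by
    rcases lt_or_eq_of_le hm_ge with h | h
    · exact h
    · exfalso
      have := huniq hpt ⟨hh0, hh1⟩ h.symm
      linarith
  set β : ℝ := m / hpt with hβ
  have hβ1 : 1 < β := (one_lt_div hh0).mpr hm_gt
  set q : ℝ := max ((μstar - m) / hpt) (1/2) with hq
  have hq0 : 0 < q := lt_max_of_lt_right (by norm_num)
  have hq1 : q < 1 := by
    apply max_lt
    · rw [div_lt_one hh0]
      have : μstar - hpt = hpt := by simp only [hhpt]; ring
      linarith
    · norm_num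
  -- chord inequality
  have chord : ∀ u : ℝ, hpt ≤ u → u ≤ μstar → μstar - T u ≤ q * (μstar - u) := by
    intro u hu1 hu2
    set θ : ℝ := (μstar - u) / hpt with hθ
    have hθ0 : 0 ≤ θ := div_nonneg (by linarith) hh0.le
    have hθ1 : θ ≤ 1 := by
      rw [div_le_one hh0]
      have : μstar - hpt = hpt := by simp only [hhpt]; ring
      linarith
    have hmemh : hpt ∈ Set.Icc (0:ℝ) 1 := ⟨hh0.le, hh1⟩
    have hmemμ : μstar ∈ Set.Icc (0:ℝ) 1 := ⟨hμ0.le, hμ1⟩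
    have hsum : θ + (1 - θ) = 1 := by ring
    have hcc := hconc.2 hmemh hmemμ hθ0 (by linarith) hsum
    simp only [smul_eq_mul] at hcc
    have hθh : θ * hpt = μstar - u := div_mul_cancel₀ _ hh0.ne'
    have hB : μstar = 2 * hpt := by rw [hhpt]; ring
    have hθμ : θ * μstar = 2 * (θ * hpt) := by rw [hB]; ring
    have hcomb : θ * hpt + (1 - θ) * μstar = u := by
      linarith [hθh, hθμ]
    rw [hcomb, hfix] at hcc
    -- hcc : θ * T hpt + (1 - θ) * μstar ≤ T u
    have hq_ge : (μstar - m) / hpt ≤ q := le_max_left _ _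
    have key : μstar - T u ≤ θ * (μstar - m) := by
      have : θ * m + (1 - θ) * μstar ≤ T u := hcc
      nlinarith
    calc μstar - T u ≤ θ * (μstar - m) := key
      _ = (μstar - u) * ((μstar - m) / hpt) := by
          rw [hθ]; ring
      _ ≤ (μstar - u) * q := mul_le_mul_of_nonneg_left hq_ge (by linarith)
      _ = q * (μstar - u) := mul_comm _ _
  -- growth inequality
  have growth : ∀ u : ℝ, 0 ≤ u → u ≤ hpt → β * u ≤ T u := by
    intro u hu0 huh
    have := ratio u hpt hu0 huh hh1 hh0
    calc β * u = u / hpt * m := by rw [hβ]; ring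
      _ ≤ T u := this
  have hLβ0' : 0 < Real.log β := Real.log_pos hβ1
  have hLq0' : 0 < Real.log (1/q) := Real.log_pos (by rw [lt_div_iff₀ hq0]; linarith)
  refine ⟨1 / Real.log β, 1 / Real.log (1/q), 2, by positivity, by positivity, by norm_num, ?_⟩
  intro μ₀ hμ₀ ε hε seq hseq0 hrec L hL
  obtain ⟨hμ₀0, hμ₀1⟩ := hμ₀
  obtain ⟨hε0, hε1⟩ := hε
  set Lβ : ℝ := Real.log β with hLβ
  have hLβ0 : 0 < Lβ := hLβ0'
  set Lq : ℝ := Real.log (1/q) with hLq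
  have hLq0 : 0 < Lq := hLq0'
  set X : ℝ := Real.log (1 / μ₀) with hX
  set Y : ℝ := Real.log (1 / ε) with hY
  have hX0 : 0 ≤ X := Real.log_nonneg (by rw [le_div_iff₀ hμ₀0]; linarith)
  have hY0 : 0 ≤ Y := Real.log_nonneg (by rw [le_div_iff₀ hε0]; linarith)
  -- sequence stays in (0,1]
  have S1 : ∀ t, 0 < seq t ∧ seq t ≤ 1 := by
    intro t
    induction t with
    | zero => rw [hseq0]; exact ⟨hμ₀0, hμ₀1⟩
    | succ t ih =>
      obtain ⟨ih0, ih1⟩ := ih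
      rw [hrec t]
      constructor
      · rcases le_or_gt (seq t) μstar with hc | hc
        · have := ratio (seq t) μstar ih0.le hc hμ1 hμ0
          rw [hfix] at this
          have h2 : seq t / μstar * μstar = seq t := div_mul_cancel₀ _ hμ0.ne'
          rw [h2] at this
          exact lt_of_lt_of_le ih0 this
        · have := hmono ⟨hμ0.le, hμ1⟩ ⟨ih0.le, ih1⟩ hc.le
          rw [hfix] at this
          exact lt_of_lt_of_le hμ0 this
      · exact Tmap_le_one k hρ hγ ih0.le ih1
  -- growth phase
  have S2 : ∀ t, min hpt (β ^ t * μ₀) ≤ seq t := by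
    intro t
    induction t with
    | zero => rw [hseq0]; simpa using min_le_right hpt μ₀
    | succ t ih =>
      obtain ⟨hs0, hs1⟩ := S1 t
      rw [hrec t]
      rcases le_or_gt hpt (seq t) with hc | hc
      · have := hmono ⟨hh0.le, hh1⟩ ⟨hs0.le, hs1⟩ hc
        refine le_trans (min_le_left _ _) (le_trans hm_ge ?_)
        exact this
      · have hβt : β ^ t * μ₀ ≤ seq t := by
          rcases le_or_gt hpt (β ^ t * μ₀) with hd | hd
          · exfalso
            have h3 : min hpt (β ^ t * μ₀) = hpt := min_eq_left hd
            rw [h3] at ih; linarith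
          · have h3 : min hpt (β ^ t * μ₀) = β ^ t * μ₀ := min_eq_right hd.le
            rw [h3] at ih; exact ih
        have hg := growth (seq t) hs0.le hc.le
        refine le_trans (min_le_right _ _) (le_trans ?_ hg)
        have : β ^ (t+1) * μ₀ = β * (β ^ t * μ₀) := by ring
        rw [this]
        exact mul_le_mul_of_nonneg_left hβt (by linarith)
  -- contraction phase
  have S3 : ∀ t s, hpt ≤ seq t → hpt ≤ seq (t + s) ∧ μstar - seq (t + s) ≤ q ^ s * μstar := by
    intro t s ht
    induction s with
    | zero =>
      refine ⟨ht, ?_⟩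
      simp only [pow_zero, one_mul]
      obtain ⟨h0, _⟩ := S1 t
      simp only [Nat.add_zero]
      linarith
    | succ s ih =>
      obtain ⟨ih1, ih2⟩ := ih
      obtain ⟨hs0, hs1⟩ := S1 (t + s)
      have hrw : t + (s + 1) = (t + s) + 1 := by omega
      rw [hrw, hrec (t + s)]
      rcases le_or_gt (seq (t + s)) μstar with hc | hc
      · have hch := chord (seq (t + s)) ih1 hc
        constructor
        · have := hmono ⟨hh0.le, hh1⟩ ⟨hs0.le, hs1⟩ ih1
          linarith
        · calc μstar - T (seq (t + s)) ≤ q * (μstar - seq (t + s)) := hch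
            _ ≤ q * (q ^ s * μstar) := mul_le_mul_of_nonneg_left ih2 hq0.le
            _ = q ^ (s + 1) * μstar := by ring
      · have := hmono ⟨hμ0.le, hμ1⟩ ⟨hs0.le, hs1⟩ hc.le
        rw [hfix] at this
        constructor
        · linarith
        · have : μstar - T (seq (t + s)) ≤ 0 := by linarith
          have h2 : 0 ≤ q ^ (s + 1) * μstar := by positivity
          linarith
  -- final assembly
  set t₁ : ℕ := ⌈(1 / Lβ) * X⌉₊ with ht₁
  have ht₁ge : (1 / Lβ) * X ≤ (t₁ : ℝ) := Nat.le_ceil _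
  have ht₁lt : (t₁ : ℝ) < (1 / Lβ) * X + 1 := Nat.ceil_lt_add_one (by positivity)
  -- phase 1 conclusion: hpt ≤ seq t₁
  have hphase1 : hpt ≤ seq t₁ := by
    have hkey : hpt ≤ β ^ t₁ * μ₀ := by
      have hβ0 : (0:ℝ) < β := by linarith
      have hlog : Real.log hpt ≤ Real.log (β ^ t₁ * μ₀) := by
        rw [Real.log_mul (by positivity) hμ₀0.ne', Real.log_pow]
        have h1 : X ≤ (t₁ : ℝ) * Lβ := by
          have := mul_le_mul_of_nonneg_right ht₁ge hLβ0.le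
          rw [one_div, inv_mul_eq_div, div_mul_eq_mul_div, mul_div_assoc,
            div_self hLβ0.ne', mul_one] at this
          exact this
        have h2 : Real.log hpt ≤ 0 := Real.log_nonpos hh0.le hh1
        have h3 : X + Real.log μ₀ = 0 := by
          rw [hX, one_div, Real.log_inv]; ring
        linarith
      exact (Real.log_le_log_iff hh0 (by positivity)).mp hlog
    have := S2 t₁
    rw [min_eq_left hkey] at this
    exact this
  have ht₁L : t₁ ≤ L := by
    have hlt : (t₁ : ℝ) < (L : ℝ) := by
      have hC2Y : 0 ≤ 1 / Lq * Y := by positivity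
      calc (t₁ : ℝ) < 1 / Lβ * X + 1 := ht₁lt
        _ ≤ 1 / Lβ * X + 1 / Lq * Y + 2 := by linarith
        _ ≤ (L : ℝ) := hL
    exact_mod_cast hlt.le
  set s : ℕ := L - t₁ with hs
  have hLs : L = t₁ + s := by omega
  have hsY : 1 / Lq * Y ≤ (s : ℝ) := by
    have hcast : (s : ℝ) = (L : ℝ) - (t₁ : ℝ) := by
      rw [hs]; push_cast [Nat.cast_sub ht₁L]; ring
    rw [hcast]
    have : 1 / Lβ * X + 1 / Lq * Y + 2 ≤ (L : ℝ) := hL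
    linarith
  have hqs : q ^ s ≤ ε := by
    have hlog : Real.log (q ^ s) ≤ Real.log ε := by
      rw [Real.log_pow]
      have h1 : Y ≤ (s : ℝ) * Lq := by
        have := mul_le_mul_of_nonneg_right hsY hLq0.le
        rw [one_div, inv_mul_eq_div, div_mul_eq_mul_div, mul_div_assoc,
          div_self hLq0.ne', mul_one] at this
        exact this
      have h2 : Lq = - Real.log q := by rw [hLq, one_div, Real.log_inv]
      have h3 : Y = - Real.log ε := by rw [hY, one_div, Real.log_inv]
      rw [h2] at h1
      rw [h3] at h1
      linarith
    exact (Real.log_le_log_iff (by positivity) hε0).mp hlog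
  have := (S3 t₁ s hphase1).2
  rw [← hLs] at this
  have hfin : q ^ s * μstar ≤ ε * μstar := mul_le_mul_of_nonneg_right hqs hμ0.le
  have hexp : (1 - ε) * μstar = μstar - ε * μstar := by ring
  linarith
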